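/- The Fréchet derivative of the governing operator G at a constant function r⋆ > 0 is given by DG(r⋆)ρ = (ρ_xx + r⋆^{−2}ρ) − (1/2π)∫_{𝕋}(ρ_xx(x) + r⋆^{−2}ρ(x)) dx for ρ ∈ C²(𝕋). -/

import Mathlib

open Real

noncomputable def meanCurv (r : ℝ → ℝ) (x : ℝ) : ℝ :=
  1 / (r x * Real.sqrt (1 + (deriv r x) ^ 2)) -
    deriv (deriv r) x / (1 + (deriv r x) ^ 2) ^ ((3 : ℝ) / 2)

noncomputable def surf (r : ℝ → ℝ) : ℝ :=
  ∫ x in (-π)..π, r x * Real.sqrt (1 + (deriv r x) ^ 2)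

noncomputable def avgH (r : ℝ → ℝ) : ℝ :=
  (1 / surf r) * ∫ x in (-π)..π, meanCurv r x * r x * Real.sqrt (1 + (deriv r x) ^ 2)

noncomputable def Gop (r : ℝ → ℝ) (x : ℝ) : ℝ :=
  Real.sqrt (1 + (deriv r x) ^ 2) * (avgH r - meanCurv r x)


lemma aux_one_le_sqrt (t : ℝ) : 1 ≤ Real.sqrt (1 + t ^ 2) := by
  have := Real.sqrt_le_sqrt (show (1:ℝ) ≤ 1 + t ^ 2 by nlinarith)
  simpa using this

lemma aux_sqrt_le (t : ℝ) : Real.sqrt (1 + t ^ 2) ≤ 1 + t ^ 2 / 2 := by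
  have h0 : (0:ℝ) ≤ 1 + t ^ 2 := by positivity
  have h1 := Real.sq_sqrt h0
  have h2 := Real.sqrt_nonneg (1 + t ^ 2)
  nlinarith

lemma rpow_three_halves (a : ℝ) (h : 0 ≤ a) : a ^ ((3:ℝ)/2) = Real.sqrt a ^ 3 := by
  rw [Real.sqrt_eq_rpow, ← Real.rpow_natCast (a ^ ((1:ℝ)/2)) 3, ← Real.rpow_mul h]
  norm_num

lemma hasDerivAt_of_sq_bound (f : ℝ → ℝ) (L C : ℝ)
    (h : ∀ s : ℝ, |s| ≤ 1 → |f s - f 0 - s * L| ≤ C * s ^ 2) :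
    HasDerivAt f L 0 := by
  rw [hasDerivAt_iff_isLittleO]
  have h2 : (fun s : ℝ => f s - f 0 - (s - 0) • L) =O[nhds 0] fun s : ℝ => s ^ 2 := by
    rw [Asymptotics.isBigO_iff]
    refine ⟨C, ?_⟩
    filter_upwards [Metric.closedBall_mem_nhds (0:ℝ) one_pos] with s hs
    have hs1 : |s| ≤ 1 := by simpa [Real.dist_eq] using hs
    simpa [Real.norm_eq_abs, abs_pow, sq_abs, smul_eq_mul] using h s hs1
  have h3 : (fun s : ℝ => s ^ 2) =o[nhds 0] fun s : ℝ => s - 0 := by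
    simpa using Asymptotics.isLittleO_pow_pow (𝕜 := ℝ) (one_lt_two)
  exact h2.trans_isLittleO h3
noncomputable def Lfun (u : ℝ → ℝ) (s : ℝ) : ℝ :=
  ∫ y in (-π)..π, Real.sqrt (1 + (s * u y) ^ 2)

noncomputable def Mfun (f u : ℝ → ℝ) (s : ℝ) : ℝ :=
  ∫ y in (-π)..π, f y * Real.sqrt (1 + (s * u y) ^ 2)

noncomputable def Kfun (c : ℝ) (f u v : ℝ → ℝ) (s : ℝ) : ℝ :=
  ∫ y in (-π)..π, v y * (c + s * f y) / (1 + (s * u y) ^ 2)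

lemma sqrt_cont (u : ℝ → ℝ) (hu : Continuous u) (s : ℝ) :
    Continuous (fun y => Real.sqrt (1 + (s * u y) ^ 2)) :=
  (continuous_const.add (((continuous_const.mul hu)).pow 2)).sqrt

lemma Lfun_zero : Lfun u 0 = 2 * π := by
  simp [Lfun, two_mul]

lemma Mfun_zero (f u : ℝ → ℝ) : Mfun f u 0 = ∫ y in (-π)..π, f y := by
  simp [Mfun]

lemma Kfun_zero (c : ℝ) (f u v : ℝ → ℝ) :
    Kfun c f u v 0 = c * ∫ y in (-π)..π, v y := by
  simp only [Kfun, zero_mul, mul_zero, add_zero, zero_pow, ne_eq, OfNat.ofNat_ne_zero,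
    not_false_eq_true, div_one]
  rw [show (fun y => v y * c) = fun y => c * v y by funext y; ring]
  exact intervalIntegral.integral_const_mul c v

lemma Lfun_bound (u : ℝ → ℝ) (hu : Continuous u) (Cb : ℝ)
    (hb : ∀ y ∈ Set.uIcc (-π) π, |u y| ≤ Cb) (s : ℝ) :
    |Lfun u s - 2 * π| ≤ (Cb ^ 2 * π) * s ^ 2 := by
  have hint : Lfun u s - 2 * π =
      ∫ y in (-π)..π, (Real.sqrt (1 + (s * u y) ^ 2) - 1) := by
    rw [intervalIntegral.integral_sub ((sqrt_cont u hu s).intervalIntegrable _ _)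
      (intervalIntegrable_const)]
    simp [Lfun, two_mul]
  rw [hint]
  have hb2 : ∀ y ∈ Set.uIoc (-π) π, ‖Real.sqrt (1 + (s * u y) ^ 2) - 1‖ ≤ s ^ 2 * Cb ^ 2 / 2 := by
    intro y hy
    have hy' : y ∈ Set.uIcc (-π) π := Set.uIoc_subset_uIcc hy
    have h1 := aux_one_le_sqrt (s * u y)
    have h2 := aux_sqrt_le (s * u y)
    have h3 : |u y| ≤ Cb := hb y hy'
    have h4 : (u y) ^ 2 ≤ Cb ^ 2 := by
      have := abs_nonneg (u y)
      nlinarith [sq_abs (u y)]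
    rw [Real.norm_eq_abs, abs_of_nonneg (by linarith)]
    have : (s * u y) ^ 2 ≤ s ^ 2 * Cb ^ 2 := by nlinarith [sq_nonneg s]
    linarith
  have := intervalIntegral.norm_integral_le_of_norm_le_const hb2
  have hπ : |π - (-π)| = 2 * π := by
    rw [abs_of_pos (by linarith [Real.pi_pos])]; ring
  rw [Real.norm_eq_abs] at this
  rw [hπ] at this
  calc |∫ y in (-π)..π, (Real.sqrt (1 + (s * u y) ^ 2) - 1)| ≤ s ^ 2 * Cb ^ 2 / 2 * (2 * π) := this
    _ = (Cb ^ 2 * π) * s ^ 2 := by ring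
lemma one_add_sq_pos (t : ℝ) : (0:ℝ) < 1 + t ^ 2 := by positivity

lemma Kfun_cont (c : ℝ) (f u v : ℝ → ℝ) (hf : Continuous f) (hu : Continuous u)
    (hv : Continuous v) (s : ℝ) :
    Continuous (fun y => v y * (c + s * f y) / (1 + (s * u y) ^ 2)) := by
  apply Continuous.div (hv.mul (continuous_const.add (continuous_const.mul hf)))
    (continuous_const.add ((continuous_const.mul hu).pow 2))
  intro y
  exact ne_of_gt (one_add_sq_pos (s * u y))

lemma Mfun_bound (f u : ℝ → ℝ) (hf : Continuous f) (hu : Continuous u) (Cb : ℝ)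
    (hbf : ∀ y ∈ Set.uIcc (-π) π, |f y| ≤ Cb)
    (hbu : ∀ y ∈ Set.uIcc (-π) π, |u y| ≤ Cb) (s : ℝ) :
    |Mfun f u s - Mfun f u 0| ≤ (Cb ^ 3 * π) * s ^ 2 := by
  have h0 : Mfun f u 0 = ∫ y in (-π)..π, f y := by simp [Mfun]
  have hint : Mfun f u s - Mfun f u 0 =
      ∫ y in (-π)..π, (f y * Real.sqrt (1 + (s * u y) ^ 2) - f y) := by
    rw [h0, Mfun, ← intervalIntegral.integral_sub (f := fun y => f y * Real.sqrt (1 + (s * u y) ^ 2))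
      ((hf.mul (sqrt_cont u hu s)).intervalIntegrable _ _) (hf.intervalIntegrable _ _)]
  rw [hint]
  have hb2 : ∀ y ∈ Set.uIoc (-π) π,
      ‖f y * Real.sqrt (1 + (s * u y) ^ 2) - f y‖ ≤ Cb * (s ^ 2 * Cb ^ 2 / 2) := by
    intro y hy
    have hy' : y ∈ Set.uIcc (-π) π := Set.uIoc_subset_uIcc hy
    have h1 := aux_one_le_sqrt (s * u y)
    have h2 := aux_sqrt_le (s * u y)
    have h3 : |f y| ≤ Cb := hbf y hy'
    have h4 : |u y| ≤ Cb := hbu y hy'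
    have hu2 : u y ^ 2 ≤ Cb ^ 2 := by nlinarith [sq_abs (u y), abs_nonneg (u y)]
    have h5 : (s * u y) ^ 2 ≤ s ^ 2 * Cb ^ 2 := by
      rw [mul_pow]; exact mul_le_mul_of_nonneg_left hu2 (sq_nonneg s)
    have : f y * Real.sqrt (1 + (s * u y) ^ 2) - f y
        = f y * (Real.sqrt (1 + (s * u y) ^ 2) - 1) := by ring
    rw [this, Real.norm_eq_abs, abs_mul, abs_of_nonneg (by linarith : (0:ℝ) ≤ _ - 1)]
    have hCb : 0 ≤ Cb := le_trans (abs_nonneg _) h3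
    have := mul_le_mul h3 (by linarith : Real.sqrt (1 + (s * u y) ^ 2) - 1 ≤ s ^ 2 * Cb ^ 2 / 2)
      (by linarith) hCb
    linarith
  have h6 := intervalIntegral.norm_integral_le_of_norm_le_const hb2
  have hπ : |π - (-π)| = 2 * π := by
    rw [abs_of_pos (by linarith [Real.pi_pos])]; ring
  rw [Real.norm_eq_abs, hπ] at h6
  calc |∫ y in (-π)..π, (f y * Real.sqrt (1 + (s * u y) ^ 2) - f y)|
      ≤ Cb * (s ^ 2 * Cb ^ 2 / 2) * (2 * π) := h6
    _ = (Cb ^ 3 * π) * s ^ 2 := by ring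

lemma Kfun_bound (c : ℝ) (hc : 0 < c) (f u v : ℝ → ℝ)
    (hf : Continuous f) (hu : Continuous u) (hv : Continuous v) (Cb : ℝ) (hCb1 : 1 ≤ Cb)
    (hbf : ∀ y ∈ Set.uIcc (-π) π, |f y| ≤ Cb)
    (hbu : ∀ y ∈ Set.uIcc (-π) π, |u y| ≤ Cb)
    (hbv : ∀ y ∈ Set.uIcc (-π) π, |v y| ≤ Cb)
    (s : ℝ) (hs : |s| ≤ 1) :
    |Kfun c f u v s - Kfun c f u v 0| ≤ (2 * π * (Cb ^ 2 + c * Cb ^ 3)) * |s| := by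
  have hint : Kfun c f u v s - Kfun c f u v 0 =
      ∫ y in (-π)..π, (v y * (c + s * f y) / (1 + (s * u y) ^ 2) - v y * c) := by
    rw [Kfun, Kfun, ← intervalIntegral.integral_sub
      ((Kfun_cont c f u v hf hu hv s).intervalIntegrable _ _)
      ((Kfun_cont c f u v hf hu hv 0).intervalIntegrable _ _)]
    congr 1
    funext y
    simp
  rw [hint]
  have hb2 : ∀ y ∈ Set.uIoc (-π) π,
      ‖v y * (c + s * f y) / (1 + (s * u y) ^ 2) - v y * c‖ ≤ (Cb ^ 2 + c * Cb ^ 3) * |s| := by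
    intro y hy
    have hy' : y ∈ Set.uIcc (-π) π := Set.uIoc_subset_uIcc hy
    have h3 : |f y| ≤ Cb := hbf y hy'
    have h4 : |u y| ≤ Cb := hbu y hy'
    have h5 : |v y| ≤ Cb := hbv y hy'
    set w : ℝ := (s * u y) ^ 2 with hw
    have hw0 : 0 ≤ w := sq_nonneg _
    have hD : (1:ℝ) ≤ 1 + w := by linarith
    have hDne : (1 + w) ≠ 0 := by linarith
    have heq : v y * (c + s * f y) / (1 + w) - v y * c
        = (v y * (s * f y - c * w)) / (1 + w) := by
      field_simp
      ring
    rw [heq, Real.norm_eq_abs, abs_div, abs_of_pos (by linarith : (0:ℝ) < 1 + w)]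
    have hd : |v y * (s * f y - c * w)| / (1 + w) ≤ |v y * (s * f y - c * w)| :=
      div_le_self (abs_nonneg _) hD
    have hnum : |v y * (s * f y - c * w)| ≤ (Cb ^ 2 + c * Cb ^ 3) * |s| := by
      rw [abs_mul]
      have h6 : |s * f y - c * w| ≤ |s| * Cb + c * (|s| * Cb ^ 2) := by
        have h7 : |s * f y - c * w| ≤ |s * f y| + |c * w| := abs_sub _ _
        have h8 : |s * f y| = |s| * |f y| := abs_mul _ _
        have h9 : |c * w| = c * w := abs_of_nonneg (by positivity)
        have h10 : w ≤ |s| * Cb ^ 2 := by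
          have hs2 : s ^ 2 ≤ |s| := by nlinarith [sq_abs s, abs_nonneg s]
          have hu2 : u y ^ 2 ≤ Cb ^ 2 := by nlinarith [sq_abs (u y), abs_nonneg (u y)]
          have hw1 : w ≤ s ^ 2 * Cb ^ 2 := by
            rw [hw, mul_pow]; exact mul_le_mul_of_nonneg_left hu2 (sq_nonneg s)
          have hw2 : s ^ 2 * Cb ^ 2 ≤ |s| * Cb ^ 2 :=
            mul_le_mul_of_nonneg_right hs2 (by positivity)
          linarith
        have h11 : |s| * |f y| ≤ |s| * Cb :=
          mul_le_mul_of_nonneg_left h3 (abs_nonneg s)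
        nlinarith
      have hvnn := abs_nonneg (v y)
      have hsnn := abs_nonneg s
      calc |v y| * |s * f y - c * w| ≤ Cb * (|s| * Cb + c * (|s| * Cb ^ 2)) := by
            apply mul_le_mul h5 h6 (abs_nonneg _) (by linarith)
        _ = (Cb ^ 2 + c * Cb ^ 3) * |s| := by ring
    linarith
  have h6 := intervalIntegral.norm_integral_le_of_norm_le_const hb2
  have hπ : |π - (-π)| = 2 * π := by
    rw [abs_of_pos (by linarith [Real.pi_pos])]; ring
  rw [Real.norm_eq_abs, hπ] at h6
  calc |∫ y in (-π)..π, (v y * (c + s * f y) / (1 + (s * u y) ^ 2) - v y * c)|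
      ≤ (Cb ^ 2 + c * Cb ^ 3) * |s| * (2 * π) := h6
    _ = (2 * π * (Cb ^ 2 + c * Cb ^ 3)) * |s| := by ring

lemma sMul_hasDerivAt (g : ℝ → ℝ) (C : ℝ) (h : ∀ s : ℝ, |s| ≤ 1 → |g s - g 0| ≤ C * |s|) :
    HasDerivAt (fun s => s * g s) (g 0) 0 := by
  apply hasDerivAt_of_sq_bound _ _ C
  intro s hs
  have h1 : |s * g s - 0 * g 0 - s * g 0| = |s| * |g s - g 0| := by
    rw [← abs_mul]; ring_nf
  rw [h1]
  calc |s| * |g s - g 0| ≤ |s| * (C * |s|) :=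
        mul_le_mul_of_nonneg_left (h s hs) (abs_nonneg s)
    _ = C * s ^ 2 := by rw [← sq_abs]; ring

/-- The (directional) derivative of the governing operator `G` at a constant function
`r⋆ > 0`, in the direction `ρ`, is
`ρ ↦ (ρ_xx + r⋆⁻²ρ) − (1/2π)∫(ρ_xx + r⋆⁻²ρ)`. -/
theorem frechet_deriv_G_at_cylinder (c : ℝ) (hc : 0 < c)
    (ρ : ℝ → ℝ) (hρ : ContDiff ℝ 2 ρ) (hper : Function.Periodic ρ (2 * π)) :
    ∀ x : ℝ,
      HasDerivAt (fun s : ℝ => Gop (fun y => c + s * ρ y) x)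
        ((deriv (deriv ρ) x + ρ x / c ^ 2) -
          (1 / (2 * π)) * ∫ y in (-π)..π, (deriv (deriv ρ) y + ρ y / c ^ 2)) 0 := by
  intro x
  have hπ := Real.pi_pos
  -- smoothness facts
  have hρd : Differentiable ℝ ρ := hρ.differentiable (by norm_num)
  have h12 : ContDiff ℝ (1 + 1) ρ := by
    have h2 : ((1:WithTop ℕ∞) + 1) = 2 := by norm_num
    rw [h2]; exact hρ
  obtain ⟨-, -, hCone⟩ := contDiff_succ_iff_deriv.mp h12
  have hud : Differentiable ℝ (deriv ρ) := hCone.differentiable one_ne_zero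
  have h01 : ContDiff ℝ (0 + 1) (deriv ρ) := by
    have h2 : ((0:WithTop ℕ∞) + 1) = 1 := by norm_num
    rw [h2]; exact hCone
  obtain ⟨-, -, hCzero⟩ := contDiff_succ_iff_deriv.mp h01
  have hvc : Continuous (deriv (deriv ρ)) := hCzero.continuous
  have hρc : Continuous ρ := hρ.continuous
  have huc : Continuous (deriv ρ) := hCone.continuous
  -- rewriting derivatives of the perturbed function
  have hd1 : ∀ s : ℝ, deriv (fun y => c + s * ρ y) = fun y => s * deriv ρ y := by
    intro s; funext y
    exact (((hρd y).hasDerivAt.const_mul s).const_add c).deriv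
  have hd2 : ∀ s : ℝ, deriv (fun y => s * deriv ρ y) = fun y => s * deriv (deriv ρ) y := by
    intro s; funext y
    exact ((hud y).hasDerivAt.const_mul s).deriv
  -- uniform bounds on the period interval
  obtain ⟨C1, hC1b⟩ :=
    (isCompact_uIcc (a := -π) (b := π)).exists_bound_of_continuousOn hρc.continuousOn
  obtain ⟨C2, hC2b⟩ :=
    (isCompact_uIcc (a := -π) (b := π)).exists_bound_of_continuousOn huc.continuousOn
  obtain ⟨C3, hC3b⟩ :=
    (isCompact_uIcc (a := -π) (b := π)).exists_bound_of_continuousOn hvc.continuousOn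
  set Cb := max 1 (max C1 (max C2 C3)) with hCbdef
  have hCb1 : (1:ℝ) ≤ Cb := le_max_left _ _
  have hCb0 : (0:ℝ) < Cb := by linarith
  have hbρ : ∀ y ∈ Set.uIcc (-π) π, |ρ y| ≤ Cb := by
    intro y hy
    calc |ρ y| ≤ C1 := by simpa using hC1b y hy
      _ ≤ Cb := le_trans (le_max_left _ _) (le_max_right _ _)
  have hbu : ∀ y ∈ Set.uIcc (-π) π, |deriv ρ y| ≤ Cb := by
    intro y hy
    calc |deriv ρ y| ≤ C2 := by simpa using hC2b y hy
      _ ≤ Cb := le_trans (le_trans (le_max_left _ _) (le_max_right _ _)) (le_max_right _ _)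
  have hbv : ∀ y ∈ Set.uIcc (-π) π, |deriv (deriv ρ) y| ≤ Cb := by
    intro y hy
    calc |deriv (deriv ρ) y| ≤ C3 := by simpa using hC3b y hy
      _ ≤ Cb := le_trans (le_trans (le_max_right _ _) (le_max_right _ _)) (le_max_right _ _)
  set A := (∫ y in (-π)..π, ρ y) with hAdef
  set B := (∫ y in (-π)..π, deriv (deriv ρ) y) with hBdef
  -- mean curvature formula
  have hmc : ∀ (s : ℝ) (y : ℝ), meanCurv (fun y' => c + s * ρ y') y =
      1 / ((c + s * ρ y) * Real.sqrt (1 + (s * deriv ρ y) ^ 2))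
        - s * deriv (deriv ρ) y / (1 + (s * deriv ρ y) ^ 2) ^ ((3:ℝ)/2) := by
    intro s y
    simp only [meanCurv, hd1 s, hd2 s]
  -- surface area decomposition
  have hSSs : ∀ s : ℝ, surf (fun y => c + s * ρ y)
      = c * Lfun (deriv ρ) s + s * Mfun ρ (deriv ρ) s := by
    intro s
    simp only [surf, Lfun, Mfun, hd1 s]
    rw [← intervalIntegral.integral_const_mul, ← intervalIntegral.integral_const_mul,
      ← intervalIntegral.integral_add (f := fun y => c * Real.sqrt (1 + (s * deriv ρ y) ^ 2))
        (g := fun y => s * (ρ y * Real.sqrt (1 + (s * deriv ρ y) ^ 2)))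
        ((continuous_const.mul (sqrt_cont _ huc s)).intervalIntegrable _ _)
        ((continuous_const.mul (hρc.mul (sqrt_cont _ huc s))).intervalIntegrable _ _)]
    apply intervalIntegral.integral_congr
    intro y _
    simp only
    ring
  have hSS0 : surf (fun y => c + (0:ℝ) * ρ y) = 2 * π * c := by
    rw [hSSs 0, Lfun_zero]; ring
  -- derivative of the surface area
  have hLd : HasDerivAt (Lfun (deriv ρ)) 0 0 := by
    apply hasDerivAt_of_sq_bound _ _ (Cb ^ 2 * π)
    intro s _
    rw [Lfun_zero, mul_zero, sub_zero]
    exact Lfun_bound (deriv ρ) huc Cb hbu s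
  have hMd : HasDerivAt (fun s : ℝ => s * Mfun ρ (deriv ρ) s) A 0 := by
    have h := sMul_hasDerivAt (Mfun ρ (deriv ρ)) (Cb ^ 3 * π) ?_
    · rwa [Mfun_zero] at h
    · intro s hs
      have h1 := Mfun_bound ρ (deriv ρ) hρc huc Cb hbρ hbu s
      have h2 : s ^ 2 ≤ |s| := by nlinarith [sq_abs s, abs_nonneg s]
      have h3 : (0:ℝ) ≤ Cb ^ 3 * π := by positivity
      calc |Mfun ρ (deriv ρ) s - Mfun ρ (deriv ρ) 0| ≤ (Cb ^ 3 * π) * s ^ 2 := h1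
        _ ≤ (Cb ^ 3 * π) * |s| := mul_le_mul_of_nonneg_left h2 h3
  have hSSd : HasDerivAt (fun s : ℝ => surf (fun y => c + s * ρ y)) A 0 := by
    have hfun : (fun s : ℝ => surf (fun y => c + s * ρ y))
        = fun s => c * Lfun (deriv ρ) s + s * Mfun ρ (deriv ρ) s := funext hSSs
    rw [hfun]
    have := (hLd.const_mul c).add hMd
    simpa using (show HasDerivAt (fun s => c * Lfun (deriv ρ) s + s * Mfun ρ (deriv ρ) s)
      (c * 0 + A) 0 from this)
  -- derivative of the numerator
  have hKd : HasDerivAt (fun s : ℝ => s * Kfun c ρ (deriv ρ) (deriv (deriv ρ)) s) (c * B) 0 := by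
    have h := sMul_hasDerivAt (Kfun c ρ (deriv ρ) (deriv (deriv ρ)))
      (2 * π * (Cb ^ 2 + c * Cb ^ 3))
      (fun s hs => Kfun_bound c hc ρ (deriv ρ) (deriv (deriv ρ)) hρc huc hvc Cb hCb1
        hbρ hbu hbv s hs)
    rwa [Kfun_zero] at h
  have hNd : HasDerivAt
      (fun s : ℝ => 2 * π - s * Kfun c ρ (deriv ρ) (deriv (deriv ρ)) s) (-(c * B)) 0 :=
    hKd.const_sub (2 * π)
  -- the identity for avgH, valid for small s
  have havgEq : ∀ s : ℝ, |s| * Cb < c → avgH (fun y => c + s * ρ y)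
      = (2 * π - s * Kfun c ρ (deriv ρ) (deriv (deriv ρ)) s) / surf (fun y => c + s * ρ y) := by
    intro s hsmall
    have hEq : Set.EqOn
        (fun y => meanCurv (fun y' => c + s * ρ y') y * (c + s * ρ y) *
          Real.sqrt (1 + deriv (fun y' => c + s * ρ y') y ^ 2))
        (fun y => 1 - s * (deriv (deriv ρ) y * (c + s * ρ y) / (1 + (s * deriv ρ y) ^ 2)))
        (Set.uIcc (-π) π) := by
      intro y hy
      have ha : 0 < c + s * ρ y := by
        have h1 : |s * ρ y| ≤ |s| * Cb := by
          rw [abs_mul]; exact mul_le_mul_of_nonneg_left (hbρ y hy) (abs_nonneg s)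
        have h2 := neg_abs_le (s * ρ y)
        linarith
      have hb1 : 1 ≤ Real.sqrt (1 + (s * deriv ρ y) ^ 2) := aux_one_le_sqrt _
      have hbpos : 0 < Real.sqrt (1 + (s * deriv ρ y) ^ 2) := by linarith
      have hsq : Real.sqrt (1 + (s * deriv ρ y) ^ 2) ^ 2 = 1 + (s * deriv ρ y) ^ 2 :=
        Real.sq_sqrt (by positivity)
      simp only [hmc s y, hd1 s]
      rw [rpow_three_halves _ (by positivity)]
      set b := Real.sqrt (1 + (s * deriv ρ y) ^ 2) with hbdef
      rw [← hsq]
      have hbne : b ≠ 0 := ne_of_gt hbpos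
      have hane : c + s * ρ y ≠ 0 := ne_of_gt ha
      field_simp
    unfold avgH
    rw [intervalIntegral.integral_congr hEq]
    rw [intervalIntegral.integral_sub (f := fun _ => (1:ℝ))
      (g := fun y => s * (deriv (deriv ρ) y * (c + s * ρ y) / (1 + (s * deriv ρ y) ^ 2)))
      intervalIntegrable_const
      ((continuous_const.mul
        (Kfun_cont c ρ (deriv ρ) (deriv (deriv ρ)) hρc huc hvc s)).intervalIntegrable _ _)]
    rw [intervalIntegral.integral_const_mul]
    simp only [intervalIntegral.integral_const, smul_eq_mul, mul_one]
    rw [one_div_mul_eq_div]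
    rw [show (∫ y in (-π)..π, deriv (deriv ρ) y * (c + s * ρ y) / (1 + (s * deriv ρ y) ^ 2))
      = Kfun c ρ (deriv ρ) (deriv (deriv ρ)) s from rfl]
    congr 1
    ring
  -- eventual smallness
  have hsmall : ∀ᶠ s : ℝ in nhds 0, |s| * Cb < c := by
    filter_upwards [Metric.ball_mem_nhds (0:ℝ) (show (0:ℝ) < c / Cb by positivity)] with s hs
    rw [Metric.mem_ball, Real.dist_eq, sub_zero] at hs
    calc |s| * Cb < (c / Cb) * Cb := mul_lt_mul_of_pos_right hs hCb0
      _ = c := by field_simp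
  -- elementary derivative computations at the point x
  have hPin : HasDerivAt (fun s : ℝ => 1 + (s * deriv ρ x) ^ 2) 0 0 := by
    have h2 : HasDerivAt (fun s : ℝ => s * deriv ρ x) (deriv ρ x) 0 := by
      simpa using (hasDerivAt_id (0:ℝ)).mul_const (deriv ρ x)
    have h3 := (h2.fun_pow 2).const_add 1
    refine h3.congr_deriv ?_
    norm_num
  have hP : HasDerivAt (fun s : ℝ => Real.sqrt (1 + (s * deriv ρ x) ^ 2)) 0 0 := by
    have h4 := hPin.sqrt (by norm_num)
    convert h4 using 1
    norm_num
  have hQd : HasDerivAt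
      (fun s : ℝ => 1 / ((c + s * ρ x) * Real.sqrt (1 + (s * deriv ρ x) ^ 2)))
      (-(ρ x / c ^ 2)) 0 := by
    have h1 : HasDerivAt (fun s : ℝ => c + s * ρ x) (ρ x) 0 := by
      have := ((hasDerivAt_id (0:ℝ)).mul_const (ρ x)).const_add c
      simpa using this
    have hg := h1.fun_mul hP
    have hg' : HasDerivAt
        (fun s : ℝ => (c + s * ρ x) * Real.sqrt (1 + (s * deriv ρ x) ^ 2)) (ρ x) 0 := by
      refine hg.congr_deriv ?_
      norm_num
    have hne : (c + (0:ℝ) * ρ x) * Real.sqrt (1 + ((0:ℝ) * deriv ρ x) ^ 2) ≠ 0 := by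
      norm_num; positivity
    have h2 := hg'.fun_inv hne
    simp only [one_div]
    refine h2.congr_deriv ?_
    norm_num [neg_div]
  have hDd : HasDerivAt (fun s : ℝ => (1 + (s * deriv ρ x) ^ 2) ^ ((3:ℝ)/2)) 0 0 := by
    have := hPin.rpow_const (p := (3:ℝ)/2) (Or.inl (by norm_num))
    convert this using 1
    norm_num
  have hRd : HasDerivAt
      (fun s : ℝ => s * deriv (deriv ρ) x / (1 + (s * deriv ρ x) ^ 2) ^ ((3:ℝ)/2))
      (deriv (deriv ρ) x) 0 := by
    have hnum : HasDerivAt (fun s : ℝ => s * deriv (deriv ρ) x) (deriv (deriv ρ) x) 0 := by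
      simpa using (hasDerivAt_id (0:ℝ)).mul_const (deriv (deriv ρ) x)
    have hden0 : ((1:ℝ) + ((0:ℝ) * deriv ρ x) ^ 2) ^ ((3:ℝ)/2) ≠ 0 := by
      norm_num
    have := hnum.fun_div hDd hden0
    refine this.congr_deriv ?_
    norm_num
  -- derivative of avgH part
  have hSS0ne : surf (fun y => c + (0:ℝ) * ρ y) ≠ 0 := by
    rw [hSS0]; positivity
  have hdiv := hNd.fun_div hSSd hSS0ne
  -- combine
  have hmain := hP.fun_mul (hdiv.fun_sub (hQd.fun_sub hRd))
  have hGeq : (fun s : ℝ => Gop (fun y => c + s * ρ y) x) =ᶠ[nhds 0]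
      (fun s : ℝ =>
        Real.sqrt (1 + (s * deriv ρ x) ^ 2) *
          ((2 * π - s * Kfun c ρ (deriv ρ) (deriv (deriv ρ)) s) / surf (fun y => c + s * ρ y)
            - (1 / ((c + s * ρ x) * Real.sqrt (1 + (s * deriv ρ x) ^ 2))
              - s * deriv (deriv ρ) x / (1 + (s * deriv ρ x) ^ 2) ^ ((3:ℝ)/2)))) := by
    filter_upwards [hsmall] with s hs
    simp only [Gop, hd1 s, hmc s x, havgEq s hs]
  have hint : (∫ y in (-π)..π, (deriv (deriv ρ) y + ρ y / c ^ 2)) = B + A / c ^ 2 := by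
    rw [intervalIntegral.integral_add (hvc.intervalIntegrable _ _)
      ((hρc.div_const _).intervalIntegrable _ _), intervalIntegral.integral_div]
  apply HasDerivAt.congr_of_eventuallyEq _ hGeq
  refine hmain.congr_deriv ?_
  rw [hint, hSS0]
  norm_num
  field_simp
  ring
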